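/- Let s, t, c, k be real numbers with c > 0, k > 0, and sin(s − t) ≠ 0. Set L' = 2, M' = 2, N' = k² + 1 + c, P' = 2k, and let C' = (L'·P')² + (M'·N')² − 2·L'·M'·N'·P'·cos(s − t). Let v₊ and v₋ denote the larger and smaller of the two stationary values L'/N' − (1/N')·C'/(P'·(L'·P' − M'·N'·cos(s − t)) ± N'·√(C' − (M'·P'·sin(s − t))²)), and let γ₂ = 4/(k² + 2k·cos(s − t) + 1 + c) be the SINR of the signal-alignment solution x = −s. Then v₊ − γ₂ = 16·k²·sin²(s − t) / ((k² + 2k·cos(s − t) + 1 + c)·((k + 1)² + c)·((k − 1)² + c)) and γ₂ − v₋ = 4/(k² + 2k·cos(s − t) + 1 + c). -/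

import Mathlib

set_option maxHeartbeats 2000000 in
/-- Corollary 1 of the paper: with `L' = 2`, `M' = 2`, `N' = k² + 1 + c`, `P' = 2k`
(`c > 0`, `k > 0`, `sin(s − t) ≠ 0`) and
`C' = (L'·P')² + (M'·N')² − 2·L'·M'·N'·P'·cos(s − t)`, letting `v₊` and `v₋` be the
larger and smaller of the two stationary values
`L'/N' − (1/N')·C'/(P'·(L'·P' − M'·N'·cos(s − t)) ± N'·√(C' − (M'·P'·sin(s − t))²))`
and `γ₂ = 4/(k² + 2k·cos(s − t) + 1 + c)` the SINR of the signal-alignment solution,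
one has
`v₊ − γ₂ = 16k²·sin²(s − t)/((k² + 2k·cos(s − t) + 1 + c)·((k + 1)² + c)·((k − 1)² + c))`
and `γ₂ − v₋ = 4/(k² + 2k·cos(s − t) + 1 + c)`. -/
theorem stmt_8 (s t c k : ℝ) (hc : 0 < c) (hk : 0 < k)
    (hst : Real.sin (s - t) ≠ 0)
    (L' M' N' P' : ℝ) (hL : L' = 2) (hM : M' = 2) (hN : N' = k ^ 2 + 1 + c)
    (hP : P' = 2 * k)
    (C' : ℝ)
    (hC : C' = (L' * P') ^ 2 + (M' * N') ^ 2 -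
      2 * L' * M' * N' * P' * Real.cos (s - t))
    (f : ℝ → ℝ)
    (hf : f = fun ε => L' / N' -
      (1 / N') * C' /
        (P' * (L' * P' - M' * N' * Real.cos (s - t)) +
          ε * N' * Real.sqrt (C' - (M' * P' * Real.sin (s - t)) ^ 2)))
    (vplus vminus γ₂ : ℝ)
    (hvp : vplus = max (f 1) (f (-1))) (hvm : vminus = min (f 1) (f (-1)))
    (hγ₂ : γ₂ = 4 / (k ^ 2 + 2 * k * Real.cos (s - t) + 1 + c)) :
    vplus - γ₂ =
        16 * k ^ 2 * Real.sin (s - t) ^ 2 /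
          ((k ^ 2 + 2 * k * Real.cos (s - t) + 1 + c) * ((k + 1) ^ 2 + c) *
            ((k - 1) ^ 2 + c)) ∧
      γ₂ - vminus = 4 / (k ^ 2 + 2 * k * Real.cos (s - t) + 1 + c) := by
  obtain ⟨co, si, hcod, hsid⟩ :
      ∃ x y, Real.cos (s - t) = x ∧ Real.sin (s - t) = y := ⟨_, _, rfl, rfl⟩
  have hpy : si ^ 2 + co ^ 2 = 1 := by
    rw [← hcod, ← hsid]; exact Real.sin_sq_add_cos_sq _
  have hco1 : co ≤ 1 := by rw [← hcod]; exact Real.cos_le_one _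
  have hcon : -1 ≤ co := by rw [← hcod]; exact Real.neg_one_le_cos _
  rw [hsid] at hst
  rw [hcod, hsid] at hf
  rw [hcod] at hC hγ₂
  rw [hcod, hsid]
  have hsi2 : 0 < si ^ 2 := by positivity
  have hN2k : 0 < N' - 2 * k := by rw [hN]; nlinarith [sq_nonneg (k - 1)]
  have hN2k' : 0 < N' + 2 * k := by rw [hN]; nlinarith
  have hNco : 0 < k ^ 2 + 2 * k * co + 1 + c := by nlinarith
  have hNpos : 0 < N' := by rw [hN]; nlinarith
  have hCeq : C' = 16 * k ^ 2 + 4 * N' ^ 2 - 16 * N' * k * co := by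
    rw [hC, hL, hM, hP]; ring
  have hsqrt : Real.sqrt (C' - (M' * P' * si) ^ 2) = 2 * N' - 4 * k * co := by
    have h1 : C' - (M' * P' * si) ^ 2 = (2 * N' - 4 * k * co) ^ 2 := by
      rw [hCeq, hM, hP]; nlinarith [hpy]
    rw [h1, Real.sqrt_sq (by nlinarith)]
  have hf1 : f 1 = 0 := by
    rw [hf]
    simp only [one_mul]
    rw [hsqrt, hL, hM, hP, hCeq]
    have hD : 2 * k * (2 * (2 * k) - 2 * N' * co) + N' * (2 * N' - 4 * k * co) ≠ 0 := by
      have h8 : 8 * k * N' * co ≤ 8 * k * N' := by nlinarith [mul_pos hk hNpos]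
      nlinarith [sq_nonneg (N' - 2 * k)]
    generalize hDd : 2 * k * (2 * (2 * k) - 2 * N' * co) + N' * (2 * N' - 4 * k * co) = D at hD ⊢
    field_simp
    subst hDd
    ring
  have hfm : f (-1) = (4 * N' - 8 * k * co) / ((N' - 2 * k) * (N' + 2 * k)) := by
    rw [hf]
    simp only [neg_one_mul, neg_mul]
    rw [hsqrt, hL, hM, hP, hCeq]
    have hD : 2 * k * (2 * (2 * k) - 2 * N' * co) + -(N' * (2 * N' - 4 * k * co)) ≠ 0 := by
      nlinarith [mul_pos hN2k hN2k']
    rw [show 2 * k * (2 * (2 * k) - 2 * N' * co) + -(1 * N' * (2 * N' - 4 * k * co))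
      = -2 * ((N' - 2 * k) * (N' + 2 * k)) by ring]
    have := hN2k.ne'; have := hN2k'.ne'
    field_simp
    ring
  have hfmpos : 0 < f (-1) := by
    rw [hfm]
    apply div_pos (by nlinarith) (by positivity)
  have hvp' : vplus = f (-1) := by
    rw [hvp, max_eq_right (by rw [hf1]; exact hfmpos.le)]
  have hvm' : vminus = 0 := by
    rw [hvm, min_eq_left (by rw [hf1]; exact hfmpos.le), hf1]
  have hsisq : si ^ 2 = 1 - co ^ 2 := by nlinarith
  constructor
  · rw [hvp', hfm, hγ₂, hsisq, hN]
    have e1 : (k + 1) ^ 2 + c = k ^ 2 + 1 + c + 2 * k := by ring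
    have e2 : (k - 1) ^ 2 + c = k ^ 2 + 1 + c - 2 * k := by ring
    rw [e1, e2]
    rw [hN] at hN2k hN2k'
    rw [div_sub_div _ _ (mul_pos hN2k hN2k').ne' hNco.ne',
      div_eq_div_iff (mul_pos (mul_pos hN2k hN2k') hNco).ne' (mul_pos (mul_pos hNco hN2k') hN2k).ne']
    ring
  · rw [hvm', hγ₂, sub_zero]
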